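/- Let K : 𝕋 → ℝ be a continuous function satisfying K(x) ≥ 1 for all x in the image of [−1/4,1/4] in 𝕋, and let f be a pdf supported on [−1/4,1/4]. Then ‖f∗f‖_∞ ≥ ‖f∗f‖₂² ≥ (∑_{j∈ℤ} |K̂(j)|^{4/3})^{−3}. -/

import Mathlib

open MeasureTheory

/-- The normalized Haar (probability) measure on the unit circle `ℝ/ℤ`. -/
noncomputable def haarT : Measure UnitAddCircle := AddCircle.haarAddCircle

/-- The image of `[−1/4, 1/4]` in `𝕋 = ℝ/ℤ`. -/
def QuarterArc : Set UnitAddCircle :=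
  (fun x : ℝ => (x : UnitAddCircle)) '' Set.Icc (-(1/4) : ℝ) (1/4)

/-- `f` is a pdf supported on `[−1/4,1/4]`: a nonnegative function in `L²(𝕋)` with integral 1
which vanishes a.e. outside the image of `[−1/4,1/4]` in `𝕋`. -/
structure IsPdfQuarter (f : UnitAddCircle → ℝ) : Prop where
  memL2 : MemLp f 2 haarT
  nonneg : ∀ x, 0 ≤ f x
  integral_one : ∫ x, f x ∂haarT = 1
  support : ∀ᵐ x ∂haarT, x ∉ QuarterArc → f x = 0

/-- Convolution on `𝕋` with respect to the Haar probability measure. -/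
noncomputable def convT (f g : UnitAddCircle → ℝ) (c : UnitAddCircle) : ℝ :=
  ∫ x, f x * g (c - x) ∂haarT

open Complex Filter
open scoped ENNReal ComplexConjugate

lemma haarT_def : haarT = (AddCircle.haarAddCircle : Measure UnitAddCircle) := rfl

instance : IsProbabilityMeasure haarT := by rw [haarT_def]; infer_instance
instance : haarT.IsAddLeftInvariant := by rw [haarT_def]; infer_instance
instance : haarT.IsAddRightInvariant := by rw [haarT_def]; infer_instance
instance : haarT.IsNegInvariant := by rw [haarT_def]; infer_instance

/-- The shear `(c, x) ↦ (c - x, x)` as a measurable equivalence. -/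
noncomputable def shearT : (UnitAddCircle × UnitAddCircle) ≃ᵐ (UnitAddCircle × UnitAddCircle) where
  toFun := fun p => (p.1 - p.2, p.2)
  invFun := fun p => (p.1 + p.2, p.2)
  left_inv := fun p => by simp
  right_inv := fun p => by simp
  measurable_toFun := (measurable_fst.sub measurable_snd).prodMk measurable_snd
  measurable_invFun := (measurable_fst.add measurable_snd).prodMk measurable_snd

lemma shearT_mp : MeasurePreserving shearT (haarT.prod haarT) (haarT.prod haarT) :=
  measurePreserving_sub_prod haarT haarT

lemma aesm_subT {E : Type*} [TopologicalSpace E] {h : UnitAddCircle → E}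
    (hh : AEStronglyMeasurable h haarT) :
    AEStronglyMeasurable (fun p : UnitAddCircle × UnitAddCircle => h (p.1 - p.2))
      (haarT.prod haarT) :=
  hh.comp_quasiMeasurePreserving
    (Measure.quasiMeasurePreserving_fst.comp shearT_mp.quasiMeasurePreserving)

lemma lintegral_conv_kernel {F : UnitAddCircle → ℝ≥0∞} (hF : AEMeasurable F haarT) :
    ∫⁻ p, F p.2 * F (p.1 - p.2) ∂(haarT.prod haarT)
      = (∫⁻ x, F x ∂haarT) * ∫⁻ x, F x ∂haarT := by
  calc ∫⁻ p, F p.2 * F (p.1 - p.2) ∂(haarT.prod haarT)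
      = ∫⁻ p, (fun q : UnitAddCircle × UnitAddCircle => F q.1 * F q.2) (shearT p)
          ∂(haarT.prod haarT) := by
        refine lintegral_congr fun p => ?_
        simp only [shearT, MeasurableEquiv.coe_mk, Equiv.coe_fn_mk]
        exact mul_comm _ _
    _ = ∫⁻ q, F q.1 * F q.2 ∂(haarT.prod haarT) :=
        shearT_mp.lintegral_comp_emb shearT.measurableEmbedding
          (fun q => F q.1 * F q.2)
    _ = (∫⁻ x, F x ∂haarT) * ∫⁻ x, F x ∂haarT :=
        lintegral_prod_mul hF hF

-- new material:
section
variable {f : UnitAddCircle → ℝ} (hf : IsPdfQuarter f)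
include hf

lemma f_aesm : AEStronglyMeasurable f haarT := hf.memL2.aestronglyMeasurable
lemma f_int : Integrable f haarT := hf.memL2.integrable one_le_two

lemma lintegral_nnnorm_f : ∫⁻ x, (‖f x‖₊ : ℝ≥0∞) ∂haarT = 1 := by
  have h1 : ∀ x, ((‖f x‖₊ : ℝ≥0∞)) = ENNReal.ofReal (f x) :=
    fun x => Real.enorm_eq_ofReal (hf.nonneg x)
  calc ∫⁻ x, (‖f x‖₊ : ℝ≥0∞) ∂haarT = ∫⁻ x, ENNReal.ofReal (f x) ∂haarT := by simp_rw [h1]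
    _ = ENNReal.ofReal (∫ x, f x ∂haarT) :=
        (ofReal_integral_eq_lintegral_ofReal (f_int hf) (Eventually.of_forall hf.nonneg)).symm
    _ = 1 := by rw [hf.integral_one, ENNReal.ofReal_one]

lemma prod_kernel_one :
    ∫⁻ p, (‖f p.2‖₊ : ℝ≥0∞) * ‖f (p.1 - p.2)‖₊ ∂(haarT.prod haarT) = 1 := by
  rw [lintegral_conv_kernel (F := fun x => (‖f x‖₊ : ℝ≥0∞)) (f_aesm hf).enorm, lintegral_nnnorm_f hf, one_mul]

lemma phi_aesm : AEStronglyMeasurable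
    (fun p : UnitAddCircle × UnitAddCircle => f p.2 * f (p.1 - p.2)) (haarT.prod haarT) :=
  ((f_aesm hf).comp_quasiMeasurePreserving Measure.quasiMeasurePreserving_snd).mul
    (aesm_subT (f_aesm hf))

lemma phi_integrable : Integrable
    (fun p : UnitAddCircle × UnitAddCircle => f p.2 * f (p.1 - p.2)) (haarT.prod haarT) := by
  refine ⟨phi_aesm hf, ?_⟩
  rw [HasFiniteIntegral]
  have h1 : ∀ p : UnitAddCircle × UnitAddCircle,
      ((‖f p.2 * f (p.1 - p.2)‖₊ : ℝ≥0∞)) = (‖f p.2‖₊ : ℝ≥0∞) * ‖f (p.1 - p.2)‖₊ := by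
    intro p; rw [nnnorm_mul, ENNReal.coe_mul]
  simp_rw [enorm_eq_nnnorm, h1, prod_kernel_one hf]
  exact ENNReal.one_lt_top

lemma conv_aesm : AEStronglyMeasurable (convT f f) haarT :=
  (phi_aesm hf).integral_prod_right'

end

section
variable {f : UnitAddCircle → ℝ} (hf : IsPdfQuarter f)
include hf

omit hf in
lemma sq_eLpNorm_two (h : UnitAddCircle → ℝ) :
    eLpNorm h 2 haarT ^ 2 = ∫⁻ x, (‖h x‖₊ : ℝ≥0∞) ^ (2:ℝ) ∂haarT := by
  rw [eLpNorm_eq_lintegral_rpow_enorm_toReal two_ne_zero ENNReal.ofNat_ne_top]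
  simp only [ENNReal.toReal_ofNat]
  rw [← ENNReal.rpow_natCast _ 2, ← ENNReal.rpow_mul]
  norm_num
  rfl

lemma A_lt_top : ∫⁻ x, (‖f x‖₊ : ℝ≥0∞) ^ (2:ℝ) ∂haarT < ⊤ := by
  have h2 := hf.memL2.2
  rw [eLpNorm_eq_lintegral_rpow_enorm_toReal two_ne_zero ENNReal.ofNat_ne_top] at h2
  simp only [ENNReal.toReal_ofNat] at h2
  exact (ENNReal.rpow_lt_top_iff_of_pos (by norm_num : (0:ℝ) < 1/2)).mp h2

lemma conv_nnnorm_le (c : UnitAddCircle) :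
    (‖convT f f c‖₊ : ℝ≥0∞) ≤ ∫⁻ x, (‖f x‖₊ : ℝ≥0∞) ^ (2:ℝ) ∂haarT := by
  set A := ∫⁻ x, (‖f x‖₊ : ℝ≥0∞) ^ (2:ℝ) ∂haarT with hA
  have h22 : Real.HolderConjugate 2 2 := by constructor <;> norm_num
  have hsubm : AEMeasurable (fun x => (‖f (c - x)‖₊ : ℝ≥0∞)) haarT :=
    ((f_aesm hf).enorm).comp_quasiMeasurePreserving
      (Measure.measurePreserving_sub_left haarT c).quasiMeasurePreserving
  have hsub2 : ∫⁻ x, (‖f (c - x)‖₊ : ℝ≥0∞) ^ (2:ℝ) ∂haarT = A := by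
    have := (Measure.measurePreserving_sub_left haarT c).lintegral_comp_emb
      (MeasurableEquiv.subLeft c).measurableEmbedding
      (fun x => (‖f x‖₊ : ℝ≥0∞) ^ (2:ℝ))
    exact this
  have hH := ENNReal.lintegral_mul_le_Lp_mul_Lq haarT h22 ((f_aesm hf).enorm) hsubm
  calc (‖convT f f c‖₊ : ℝ≥0∞)
      ≤ ∫⁻ x, (‖f x * f (c - x)‖₊ : ℝ≥0∞) ∂haarT := enorm_integral_le_lintegral_enorm _
    _ = ∫⁻ x, (‖f x‖₊ : ℝ≥0∞) * ‖f (c - x)‖₊ ∂haarT := by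
        simp_rw [nnnorm_mul, ENNReal.coe_mul]
    _ ≤ (∫⁻ x, (‖f x‖₊ : ℝ≥0∞) ^ (2:ℝ) ∂haarT) ^ ((1:ℝ)/2)
        * (∫⁻ x, (‖f (c - x)‖₊ : ℝ≥0∞) ^ (2:ℝ) ∂haarT) ^ ((1:ℝ)/2) := hH
    _ = A ^ ((1:ℝ)/2) * A ^ ((1:ℝ)/2) := by rw [hsub2]
    _ = A := by
        rw [← ENNReal.rpow_add_of_nonneg _ _ (by norm_num) (by norm_num)]
        norm_num

lemma conv_memTop : MemLp (convT f f) ⊤ haarT := by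
  refine memLp_top_of_bound (conv_aesm hf)
    ((∫⁻ x, (‖f x‖₊ : ℝ≥0∞) ^ (2:ℝ) ∂haarT)).toReal (Eventually.of_forall fun c => ?_)
  have h1 := conv_nnnorm_le hf c
  have h2 : ‖convT f f c‖ = ((‖convT f f c‖₊ : ℝ≥0∞)).toReal := by simp
  rw [h2]
  exact ENNReal.toReal_mono (A_lt_top hf).ne h1

lemma conv_memL2 : MemLp (convT f f) 2 haarT :=
  (conv_memTop hf).mono_exponent le_top

end

lemma fourier_add_apply (n : ℤ) (x y : UnitAddCircle) :
    fourier n (x + y) = fourier n x * fourier n y := by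
  simp_rw [fourier_apply, smul_add, AddCircle.toCircle_add, Circle.coe_mul]

section
variable {f : UnitAddCircle → ℝ} (hf : IsPdfQuarter f)
include hf

lemma fC_aesm : AEStronglyMeasurable (fun x => (f x : ℂ)) haarT :=
  Complex.continuous_ofReal.comp_aestronglyMeasurable (f_aesm hf)

lemma psi_integrable (j : ℤ) : Integrable
    (fun p : UnitAddCircle × UnitAddCircle =>
      fourier (-j) p.1 * ((f p.2 : ℂ) * (f (p.1 - p.2) : ℂ))) (haarT.prod haarT) := by
  refine ⟨?_, ?_⟩
  · exact (((map_continuous (fourier (-j))).comp continuous_fst).aestronglyMeasurable).mul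
      (((fC_aesm hf).comp_quasiMeasurePreserving Measure.quasiMeasurePreserving_snd).mul
        (aesm_subT (fC_aesm hf)))
  · rw [HasFiniteIntegral]
    have h1 : ∀ p : UnitAddCircle × UnitAddCircle,
        (‖fourier (-j) p.1 * ((f p.2 : ℂ) * (f (p.1 - p.2) : ℂ))‖₊ : ℝ≥0∞)
          = (‖f p.2‖₊ : ℝ≥0∞) * ‖f (p.1 - p.2)‖₊ := by
      intro p
      have h2 : (‖fourier (-j) p.1‖₊ : ℝ≥0∞) = 1 := by
        rw [← enorm_eq_nnnorm, ← ofReal_norm, fourier_apply, Circle.norm_coe, ENNReal.ofReal_one]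
      rw [nnnorm_mul, nnnorm_mul, ENNReal.coe_mul, ENNReal.coe_mul, h2, one_mul,
        Complex.nnnorm_real, Complex.nnnorm_real]
    simp_rw [enorm_eq_nnnorm, h1, prod_kernel_one hf]
    exact ENNReal.one_lt_top

lemma fourierCoeff_conv (j : ℤ) :
    fourierCoeff (fun c => ((convT f f c : ℝ) : ℂ)) j
      = fourierCoeff (fun x => ((f x : ℝ) : ℂ)) j ^ 2 := by
  have hpsi := psi_integrable hf j
  have hgC : ∀ c : UnitAddCircle, ((convT f f c : ℝ) : ℂ)
      = ∫ x, (f x : ℂ) * (f (c - x) : ℂ) ∂haarT := by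
    intro c
    rw [convT]
    rw [show ((∫ x, f x * f (c - x) ∂haarT : ℝ) : ℂ)
        = ∫ x, ((f x * f (c - x) : ℝ) : ℂ) ∂haarT from (integral_ofReal).symm]
    exact integral_congr_ae (Eventually.of_forall fun x => by push_cast; ring)
  have hcoeff_def : ∀ h : UnitAddCircle → ℂ,
      fourierCoeff h j = ∫ c, fourier (-j) c * h c ∂haarT := by
    intro h
    simp only [fourierCoeff, smul_eq_mul]
    rfl
  rw [hcoeff_def, hcoeff_def]
  calc ∫ c, fourier (-j) c * ((convT f f c : ℝ) : ℂ) ∂haarT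
      = ∫ c, ∫ x, fourier (-j) c * ((f x : ℂ) * (f (c - x) : ℂ)) ∂haarT ∂haarT := by
        refine integral_congr_ae (Eventually.of_forall fun c => ?_)
        dsimp only
        rw [hgC c, ← integral_const_mul]
    _ = ∫ x, ∫ c, fourier (-j) c * ((f x : ℂ) * (f (c - x) : ℂ)) ∂haarT ∂haarT :=
        integral_integral_swap hpsi
    _ = ∫ x, (f x : ℂ) * (fourier (-j) x * ∫ c, fourier (-j) c * (f c : ℂ) ∂haarT) ∂haarT := by
        refine integral_congr_ae (Eventually.of_forall fun x => ?_)
        calc ∫ c, fourier (-j) c * ((f x : ℂ) * (f (c - x) : ℂ)) ∂haarT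
            = ∫ c, (f x : ℂ) * (fourier (-j) c * (f (c - x) : ℂ)) ∂haarT := by
              refine integral_congr_ae (Eventually.of_forall fun c => ?_)
              ring
          _ = (f x : ℂ) * ∫ c, fourier (-j) c * (f (c - x) : ℂ) ∂haarT :=
              integral_const_mul _ _
          _ = (f x : ℂ) * ∫ c, fourier (-j) (c + x) * (f (c + x - x) : ℂ) ∂haarT := by
              rw [integral_add_right_eq_self (fun c => fourier (-j) c * ((f (c - x) : ℝ) : ℂ)) x]
          _ = (f x : ℂ) * ∫ c, fourier (-j) x * (fourier (-j) c * (f c : ℂ)) ∂haarT := by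
              congr 1
              refine integral_congr_ae (Eventually.of_forall fun c => ?_)
              dsimp only
              rw [add_sub_cancel_right, fourier_add_apply]
              ring
          _ = (f x : ℂ) * (fourier (-j) x * ∫ c, fourier (-j) c * (f c : ℂ) ∂haarT) := by
              rw [integral_const_mul]
    _ = (∫ c, fourier (-j) c * (f c : ℂ) ∂haarT) ^ 2 := by
        set C := ∫ c, fourier (-j) c * (f c : ℂ) ∂haarT with hC
        calc ∫ x, (f x : ℂ) * (fourier (-j) x * C) ∂haarT
            = ∫ x, (fourier (-j) x * (f x : ℂ)) * C ∂haarT := by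
              refine integral_congr_ae (Eventually.of_forall fun x => ?_)
              ring
          _ = (∫ x, fourier (-j) x * (f x : ℂ) ∂haarT) * C := integral_mul_const _ _
          _ = C ^ 2 := by rw [← hC, sq]

end

lemma KC_memL2 {K : UnitAddCircle → ℝ} (hK : Continuous K) :
    MemLp (fun x => (K x : ℂ)) 2 haarT := by
  have hc : Continuous fun x => (K x : ℂ) := Complex.continuous_ofReal.comp hK
  obtain ⟨C, hC⟩ := (isCompact_range hc.norm).bddAbove
  exact (memLp_top_of_bound hc.aestronglyMeasurable C
    (Eventually.of_forall fun x => hC (Set.mem_range_self x))).mono_exponent le_top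

section
variable {f : UnitAddCircle → ℝ} (hf : IsPdfQuarter f)
include hf

lemma part_two : eLpNorm (convT f f) 2 haarT ^ 2 ≤ eLpNorm (convT f f) ⊤ haarT := by
  have hrpow2 : ∀ y : ℝ≥0∞, y ^ (2:ℝ) = y * y := fun y => by
    rw [show (2:ℝ) = ((2:ℕ):ℝ) by norm_num, ENNReal.rpow_natCast, sq]
  have hL1g : ∫⁻ c, (‖convT f f c‖₊ : ℝ≥0∞) ∂haarT ≤ 1 := by
    calc ∫⁻ c, (‖convT f f c‖₊ : ℝ≥0∞) ∂haarT
        ≤ ∫⁻ c, ∫⁻ x, (‖f x * f (c - x)‖₊ : ℝ≥0∞) ∂haarT ∂haarT :=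
          lintegral_mono fun c => enorm_integral_le_lintegral_enorm _
      _ = ∫⁻ p, (‖f p.2 * f (p.1 - p.2)‖₊ : ℝ≥0∞) ∂(haarT.prod haarT) :=
          (lintegral_prod _ (phi_aesm hf).enorm).symm
      _ = 1 := by
          simp_rw [nnnorm_mul, ENNReal.coe_mul]
          exact prod_kernel_one hf
  rw [eLpNorm_exponent_top]
  rw [sq_eLpNorm_two (convT f f)]
  calc ∫⁻ x, (‖convT f f x‖₊ : ℝ≥0∞) ^ (2:ℝ) ∂haarT
      ≤ ∫⁻ x, eLpNormEssSup (convT f f) haarT * (‖convT f f x‖₊ : ℝ≥0∞) ∂haarT := by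
        refine lintegral_mono_ae ((ae_le_eLpNormEssSup (f := convT f f) (μ := haarT)).mono fun x hx => ?_)
        rw [hrpow2]
        exact mul_le_mul_left hx _
    _ = eLpNormEssSup (convT f f) haarT * ∫⁻ x, (‖convT f f x‖₊ : ℝ≥0∞) ∂haarT :=
        lintegral_const_mul'' _ (conv_aesm hf).enorm
    _ ≤ eLpNormEssSup (convT f f) haarT * 1 := mul_le_mul_right hL1g _
    _ = eLpNormEssSup (convT f f) haarT := mul_one _

end

section
variable {f K : UnitAddCircle → ℝ} (hf : IsPdfQuarter f) (hK : Continuous K)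
  (hK1 : ∀ x ∈ QuarterArc, 1 ≤ K x)
include hf hK hK1

lemma part_one :
    ENNReal.ofReal ((∑' j : ℤ,
        ‖fourierCoeff (fun x => (K x : ℂ)) j‖ ^ ((4 : ℝ) / 3)) ^ (-(3 : ℝ)))
      ≤ eLpNorm (convT f f) 2 haarT ^ 2 := by
  classical
  set fC : UnitAddCircle → ℂ := fun x => (f x : ℂ) with hfC
  set KC : UnitAddCircle → ℂ := fun x => (K x : ℂ) with hKCdef
  set gC : UnitAddCircle → ℂ := fun c => ((convT f f c : ℝ) : ℂ) with hgCdef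
  have hfC2 : MemLp fC 2 AddCircle.haarAddCircle := haarT_def ▸ hf.memL2.ofReal
  have hKC2 : MemLp KC 2 AddCircle.haarAddCircle := haarT_def ▸ KC_memL2 hK
  have hgC2 : MemLp gC 2 AddCircle.haarAddCircle := haarT_def ▸ (conv_memL2 hf).ofReal
  set fL : Lp ℂ 2 (AddCircle.haarAddCircle (T := 1)) := hfC2.toLp fC with hfL
  set KL : Lp ℂ 2 (AddCircle.haarAddCircle (T := 1)) := hKC2.toLp KC with hKL
  set gL : Lp ℂ 2 (AddCircle.haarAddCircle (T := 1)) := hgC2.toLp gC with hgL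
  have hreprf : ∀ j, fourierBasis.repr fL j = fourierCoeff fC j := fun j => by
    rw [fourierBasis_repr]
    exact congrFun (fourierCoeff_congr_ae (MemLp.coeFn_toLp hfC2)) j
  have hreprK : ∀ j, fourierBasis.repr KL j = fourierCoeff KC j := fun j => by
    rw [fourierBasis_repr]
    exact congrFun (fourierCoeff_congr_ae (MemLp.coeFn_toLp hKC2)) j
  have hreprg : ∀ j, fourierBasis.repr gL j = fourierCoeff gC j := fun j => by
    rw [fourierBasis_repr]
    exact congrFun (fourierCoeff_congr_ae (MemLp.coeFn_toLp hgC2)) j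
  -- inner product identities
  have hinner_tsum : (inner ℂ fL KL : ℂ)
      = ∑' j, (starRingEnd ℂ) (fourierCoeff fC j) * fourierCoeff KC j := by
    calc (inner ℂ fL KL : ℂ)
        = inner ℂ (fourierBasis.repr fL) (fourierBasis.repr KL) :=
          (fourierBasis.repr.inner_map_map fL KL).symm
      _ = ∑' j, inner ℂ (fourierBasis.repr fL j) (fourierBasis.repr KL j) :=
          lp.inner_eq_tsum _ _
      _ = ∑' j, (starRingEnd ℂ) (fourierCoeff fC j) * fourierCoeff KC j :=
          tsum_congr fun j => by rw [RCLike.inner_apply', hreprf, hreprK]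
  have hinner_val : (inner ℂ fL KL : ℂ) = ((∫ x, f x * K x ∂haarT : ℝ) : ℂ) := by
    rw [MeasureTheory.L2.inner_def]
    rw [show ((∫ x, f x * K x ∂haarT : ℝ) : ℂ)
        = ∫ x, ((f x * K x : ℝ) : ℂ) ∂haarT from (integral_ofReal).symm]
    refine integral_congr_ae ?_
    filter_upwards [MemLp.coeFn_toLp hfC2, MemLp.coeFn_toLp hKC2] with x h1 h2
    rw [h1, h2, RCLike.inner_apply]
    simp only [hfC, hKCdef, Complex.conj_ofReal]
    push_cast
    ring
  -- 1 ≤ ∫ f K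
  obtain ⟨C, hC⟩ : ∃ C : ℝ, ∀ x, ‖K x‖ ≤ C := by
    obtain ⟨C, hC⟩ := (isCompact_range hK.norm).bddAbove
    exact ⟨C, fun x => hC (Set.mem_range_self x)⟩
  have hfK_int : Integrable (fun x => f x * K x) haarT := by
    have h := (f_int hf).bdd_mul hK.aestronglyMeasurable (Eventually.of_forall hC)
    simpa [Pi.mul_apply, mul_comm] using h
  have h1K : (1:ℝ) ≤ ∫ x, f x * K x ∂haarT := by
    have hmono : ∫ x, f x ∂haarT ≤ ∫ x, f x * K x ∂haarT := by
      refine integral_mono_ae (f_int hf) hfK_int ?_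
      filter_upwards [hf.support] with x hx
      by_cases hmem : x ∈ QuarterArc
      · have h2 := hK1 x hmem
        nlinarith [hf.nonneg x]
      · rw [hx hmem]
        simp
    linarith [hf.integral_one]
  -- summability facts
  have h22' : (2:ℝ≥0∞).toReal.HolderConjugate (2:ℝ≥0∞).toReal := by
    simp only [ENNReal.toReal_ofNat]
    constructor <;> norm_num
  have hsum_fK : Summable fun j : ℤ => ‖fourierCoeff fC j‖ * ‖fourierCoeff KC j‖ := by
    have h := lp.summable_mul h22' (fourierBasis.repr fL) (fourierBasis.repr KL)
    refine h.congr fun j => ?_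
    rw [hreprf, hreprK]
  have hsum_gg : Summable fun j : ℤ => ‖fourierCoeff gC j‖ ^ 2 := by
    have h := lp.summable_mul h22' (fourierBasis.repr gL) (fourierBasis.repr gL)
    refine h.congr fun j => ?_
    rw [hreprg, sq]
  -- step 1
  have hstep1 : (1:ℝ) ≤ ∑' j : ℤ, ‖fourierCoeff fC j‖ * ‖fourierCoeff KC j‖ := by
    have hb : (1:ℝ) ≤ ‖(inner ℂ fL KL : ℂ)‖ := by
      rw [hinner_val, Complex.norm_real, Real.norm_eq_abs]
      exact le_trans h1K (le_abs_self _)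
    calc (1:ℝ) ≤ ‖(inner ℂ fL KL : ℂ)‖ := hb
      _ = ‖∑' j : ℤ, (starRingEnd ℂ) (fourierCoeff fC j) * fourierCoeff KC j‖ := by
          rw [hinner_tsum]
      _ ≤ ∑' j : ℤ, ‖(starRingEnd ℂ) (fourierCoeff fC j) * fourierCoeff KC j‖ :=
          norm_tsum_le_tsum_norm (by
            refine hsum_fK.congr fun j => ?_
            rw [norm_mul, RCLike.norm_conj])
      _ = ∑' j : ℤ, ‖fourierCoeff fC j‖ * ‖fourierCoeff KC j‖ :=
          tsum_congr fun j => by rw [norm_mul, RCLike.norm_conj]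
  -- move to ℝ≥0∞
  set a : ℤ → ℝ≥0∞ := fun j => ENNReal.ofReal ‖fourierCoeff fC j‖ with ha
  set b : ℤ → ℝ≥0∞ := fun j => ENNReal.ofReal ‖fourierCoeff KC j‖ with hb
  have hstep1' : (1:ℝ≥0∞) ≤ ∑' j : ℤ, a j * b j := by
    rw [← ENNReal.ofReal_one]
    refine le_trans (ENNReal.ofReal_le_ofReal hstep1) (le_of_eq ?_)
    rw [ENNReal.ofReal_tsum_of_nonneg
      (fun j => mul_nonneg (norm_nonneg _) (norm_nonneg _)) hsum_fK]
    exact tsum_congr fun j => ENNReal.ofReal_mul (norm_nonneg _)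
  have hconj43 : Real.HolderConjugate 4 (4/3) := by constructor <;> norm_num
  have hmeasZ : ∀ u : ℤ → ℝ≥0∞, AEMeasurable u (Measure.count : Measure ℤ) :=
    fun u => Measurable.of_discrete.aemeasurable
  have hHold := ENNReal.lintegral_mul_le_Lp_mul_Lq (Measure.count : Measure ℤ)
    hconj43 (hmeasZ a) (hmeasZ b)
  simp only [Pi.mul_apply, lintegral_count] at hHold
  rw [show (1:ℝ)/(4/3) = (3:ℝ)/4 by norm_num] at hHold
  -- Parseval: identify ∑ a^4 with the L² norm of the convolution
  have hcoeffg : ∀ j : ℤ, fourierCoeff gC j = fourierCoeff fC j ^ 2 :=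
    fun j => fourierCoeff_conv hf j
  have hA4 : ∑' j : ℤ, a j ^ (4:ℝ) = eLpNorm (convT f f) 2 haarT ^ 2 := by
    have hpt : ∀ j : ℤ, a j ^ (4:ℝ) = ENNReal.ofReal (‖fourierCoeff gC j‖ ^ 2) := by
      intro j
      rw [ha]
      rw [ENNReal.ofReal_rpow_of_nonneg (norm_nonneg _) (by norm_num : (0:ℝ) ≤ 4)]
      congr 1
      rw [hcoeffg j, norm_pow, ← pow_mul,
        show (4:ℝ) = ((4:ℕ):ℝ) by norm_num, Real.rpow_natCast]
    have hint_sq : Integrable (fun t => ‖gC t‖ ^ 2) haarT :=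
      MemLp.integrable_sq ((conv_memL2 hf).ofReal.norm)
    calc ∑' j : ℤ, a j ^ (4:ℝ)
        = ∑' j : ℤ, ENNReal.ofReal (‖fourierCoeff gC j‖ ^ 2) := tsum_congr hpt
      _ = ENNReal.ofReal (∑' j : ℤ, ‖fourierCoeff gC j‖ ^ 2) :=
          (ENNReal.ofReal_tsum_of_nonneg (fun j => sq_nonneg _) hsum_gg).symm
      _ = ENNReal.ofReal (∫ t, ‖gC t‖ ^ 2 ∂haarT) := by
          congr 1
          have hcongr : ∀ j : ℤ, fourierCoeff (gL : UnitAddCircle → ℂ) j = fourierCoeff gC j :=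
            fun j => congrFun (fourierCoeff_congr_ae (MemLp.coeFn_toLp hgC2)) j
          calc ∑' j : ℤ, ‖fourierCoeff gC j‖ ^ 2
              = ∑' j : ℤ, ‖fourierCoeff (gL : UnitAddCircle → ℂ) j‖ ^ 2 :=
                tsum_congr fun j => by rw [hcongr j]
            _ = ∫ t, ‖(gL : UnitAddCircle → ℂ) t‖ ^ 2 ∂AddCircle.haarAddCircle :=
                tsum_sq_fourierCoeff gL
            _ = ∫ t, ‖gC t‖ ^ 2 ∂haarT :=
                integral_congr_ae ((MemLp.coeFn_toLp hgC2).mono fun t ht => by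
                  simp only [hgL]
                  rw [ht])
      _ = eLpNorm (convT f f) 2 haarT ^ 2 := by
          rw [sq_eLpNorm_two (convT f f),
            ofReal_integral_eq_lintegral_ofReal hint_sq
              (Eventually.of_forall fun t => sq_nonneg _)]
          refine lintegral_congr fun t => ?_
          rw [hgCdef]
          rw [Complex.norm_real, ENNReal.ofReal_pow (norm_nonneg _), ofReal_norm,
            ← ENNReal.rpow_natCast]
          norm_num
          rfl
  -- final assembly
  by_cases hSsum : Summable fun j : ℤ => ‖fourierCoeff KC j‖ ^ ((4:ℝ)/3)
  · set S := ∑' j : ℤ, ‖fourierCoeff KC j‖ ^ ((4:ℝ)/3) with hS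
    have hS0 : 0 ≤ S := tsum_nonneg fun j => Real.rpow_nonneg (norm_nonneg _) _
    rcases eq_or_lt_of_le hS0 with h0 | hpos
    · rw [← h0, Real.zero_rpow (by norm_num : (-(3:ℝ)) ≠ 0), ENNReal.ofReal_zero]
      exact zero_le
    · have hSb : ∑' j : ℤ, b j ^ ((4:ℝ)/3) = ENNReal.ofReal S := by
        rw [hS, ENNReal.ofReal_tsum_of_nonneg
          (fun j => Real.rpow_nonneg (norm_nonneg _) _) hSsum]
        exact tsum_congr fun j =>
          ENNReal.ofReal_rpow_of_nonneg (norm_nonneg _) (by norm_num)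
      have h2 : (1:ℝ≥0∞) ≤ (eLpNorm (convT f f) 2 haarT ^ 2) ^ ((1:ℝ)/4)
          * (ENNReal.ofReal S) ^ ((3:ℝ)/4) := by
        refine le_trans hstep1' (le_trans hHold (le_of_eq ?_))
        rw [hA4, hSb]
      have key : (1:ℝ≥0∞) ≤ eLpNorm (convT f f) 2 haarT ^ 2
          * (ENNReal.ofReal S) ^ (3:ℝ) := by
        calc (1:ℝ≥0∞) = 1 ^ (4:ℝ) := (ENNReal.one_rpow _).symm
          _ ≤ ((eLpNorm (convT f f) 2 haarT ^ 2) ^ ((1:ℝ)/4)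
              * (ENNReal.ofReal S) ^ ((3:ℝ)/4)) ^ (4:ℝ) :=
            ENNReal.rpow_le_rpow h2 (by norm_num)
          _ = eLpNorm (convT f f) 2 haarT ^ 2 * (ENNReal.ofReal S) ^ (3:ℝ) := by
            rw [ENNReal.mul_rpow_of_nonneg _ _ (by norm_num : (0:ℝ) ≤ 4),
              ← ENNReal.rpow_mul, ← ENNReal.rpow_mul]
            norm_num
      have hofS_ne0 : (ENNReal.ofReal S) ≠ 0 := (ENNReal.ofReal_pos.mpr hpos).ne'
      have hofS_netop : (ENNReal.ofReal S) ≠ ⊤ := ENNReal.ofReal_ne_top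
      rw [← ENNReal.ofReal_rpow_of_pos hpos]
      calc (ENNReal.ofReal S) ^ (-(3:ℝ))
          = (ENNReal.ofReal S) ^ (-(3:ℝ)) * 1 := (mul_one _).symm
        _ ≤ (ENNReal.ofReal S) ^ (-(3:ℝ))
            * (eLpNorm (convT f f) 2 haarT ^ 2 * (ENNReal.ofReal S) ^ (3:ℝ)) :=
            mul_le_mul_right key _
        _ = eLpNorm (convT f f) 2 haarT ^ 2
            * ((ENNReal.ofReal S) ^ (-(3:ℝ)) * (ENNReal.ofReal S) ^ (3:ℝ)) := by ring
        _ = eLpNorm (convT f f) 2 haarT ^ 2 := by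
            rw [← ENNReal.rpow_add _ _ hofS_ne0 hofS_netop]
            norm_num
  · rw [tsum_eq_zero_of_not_summable hSsum,
      Real.zero_rpow (by norm_num : (-(3:ℝ)) ≠ 0), ENNReal.ofReal_zero]
    exact zero_le

end

theorem kernel_lower_bound (K : UnitAddCircle → ℝ) (hK : Continuous K)
    (hK1 : ∀ x ∈ QuarterArc, 1 ≤ K x)
    (f : UnitAddCircle → ℝ) (hf : IsPdfQuarter f) :
    ENNReal.ofReal ((∑' j : ℤ,
        ‖fourierCoeff (fun x => (K x : ℂ)) j‖ ^ ((4 : ℝ) / 3)) ^ (-(3 : ℝ)))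
        ≤ eLpNorm (convT f f) 2 haarT ^ 2 ∧
      eLpNorm (convT f f) 2 haarT ^ 2 ≤ eLpNorm (convT f f) ⊤ haarT := by
  constructor
  · have h := part_one hf hK hK1
    exact h
  · exact part_two hf
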